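/- In the gift game Nash equilibrium g₁*(μ) = [(1+μ)m₁ − m₂]/(2+μ) and g₂*(μ) = [(1+μ)m₂ − m₁]/(2+μ), both g₁* and g₂* are strictly increasing functions of μ on any interval of μ > 0 where both are positive, i.e., dg₁*/dμ = (m₁ + m₂)/(2+μ)² > 0 and dg₂*/dμ = (m₁ + m₂)/(2+μ)² > 0. -/

import Mathlib

lemma gift_deriv (a b : ℝ) {μ : ℝ} (hμ : 0 < μ) :
    HasDerivAt (fun μ => ((1 + μ) * a - b) / (2 + μ)) ((a + b) / (2 + μ) ^ 2) μ := by
  have hne : (2 + μ) ≠ 0 := by linarith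
  have h1 : HasDerivAt (fun μ : ℝ => (1 + μ) * a - b) a μ := by
    simpa using (((hasDerivAt_id μ).const_add 1).mul_const a).sub_const b
  have h2 : HasDerivAt (fun μ : ℝ => 2 + μ) 1 μ := (hasDerivAt_id μ).const_add 2
  have : HasDerivAt (fun μ => ((1 + μ) * a - b) / (2 + μ)) _ μ := h1.div h2 hne
  convert this using 1
  field_simp
  ring

theorem stmt_17 (m₁ m₂ : ℝ) (hm₁ : 0 < m₁) (hm₂ : 0 < m₂) :
    let g₁ : ℝ → ℝ := fun μ => ((1 + μ) * m₁ - m₂) / (2 + μ)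
    let g₂ : ℝ → ℝ := fun μ => ((1 + μ) * m₂ - m₁) / (2 + μ)
    (∀ μ : ℝ, 0 < μ →
      HasDerivAt g₁ ((m₁ + m₂) / (2 + μ) ^ 2) μ ∧
      HasDerivAt g₂ ((m₁ + m₂) / (2 + μ) ^ 2) μ ∧
      0 < (m₁ + m₂) / (2 + μ) ^ 2) ∧
    StrictMonoOn g₁ (Set.Ioi 0) ∧ StrictMonoOn g₂ (Set.Ioi 0) := by
  intro g₁ g₂
  have key : ∀ μ : ℝ, 0 < μ →
      HasDerivAt g₁ ((m₁ + m₂) / (2 + μ) ^ 2) μ ∧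
      HasDerivAt g₂ ((m₁ + m₂) / (2 + μ) ^ 2) μ ∧
      0 < (m₁ + m₂) / (2 + μ) ^ 2 := by
    intro μ hμ
    refine ⟨gift_deriv m₁ m₂ hμ, ?_, ?_⟩
    · have := gift_deriv m₂ m₁ hμ
      simpa [add_comm m₂ m₁] using this
    · exact div_pos (by linarith) (pow_pos (by linarith) 2)
  have mono : ∀ g : ℝ → ℝ, (∀ μ : ℝ, 0 < μ → HasDerivAt g ((m₁ + m₂) / (2 + μ) ^ 2) μ) →
      StrictMonoOn g (Set.Ioi 0) := by
    intro g hg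
    apply strictMonoOn_of_deriv_pos (convex_Ioi 0)
    · exact fun x hx => ((hg x hx).continuousAt).continuousWithinAt
    · intro x hx
      rw [interior_Ioi] at hx
      rw [(hg x hx).deriv]
      exact div_pos (by linarith) (pow_pos (by simp only [Set.mem_Ioi] at hx; linarith) 2)
  exact ⟨key, mono g₁ (fun μ hμ => (key μ hμ).1), mono g₂ (fun μ hμ => (key μ hμ).2.1)⟩
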